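/- (Refined expurgation with vanishing expurgated fraction, existence form.) Let ε > 0, let M ≥ 1, let M' be an integer with M' ≥ M(1+ε) and M' ≥ 2, let μ be a pairwise-independent ensemble with M' codewords and marginal Q, let ρ ≥ 1, and set γ = (1+ε)/ε. Then there exists a code c ∈ (𝒳^n)^{M'} such that at least M of the indices m ∈ {1, …, M'} satisfy P_{e,m}(c) ≤ γ^ρ · ( (M' − 1) · ∑_{x,x'∈𝒳^n} Q(x)Q(x')·Z(x,x')^{1/ρ} )^ρ. -/

import Mathlib

open scoped Classical

/-- `W` is a channel: nonnegative, and each row sums to one. -/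
def IsChannel {𝒳 𝒴 : Type*} [Fintype 𝒴] (W : 𝒳 → 𝒴 → ℝ) : Prop :=
  (∀ x y, 0 ≤ W x y) ∧ ∀ x, ∑ y, W x y = 1

/-- Maximum-likelihood error probability of message `m` under code `c`
(ties counted as errors). -/
noncomputable def Pem {𝒳 𝒴 : Type*} [Fintype 𝒴] {M : ℕ}
    (W : 𝒳 → 𝒴 → ℝ) (c : Fin M → 𝒳) (m : Fin M) : ℝ :=
  ∑ y, W (c m) y * (if ∃ k, k ≠ m ∧ W (c m) y ≤ W (c k) y then (1:ℝ) else 0)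

/-- Bhattacharyya coefficient between inputs `x` and `x'`. -/
noncomputable def Bhat {𝒳 𝒴 : Type*} [Fintype 𝒴] (W : 𝒳 → 𝒴 → ℝ) (x x' : 𝒳) : ℝ :=
  ∑ y, Real.sqrt (W x y * W x' y)

/-- `p` is a probability mass function on a finite type. -/
def IsPMF {α : Type*} [Fintype α] (p : α → ℝ) : Prop :=
  (∀ a, 0 ≤ p a) ∧ ∑ a, p a = 1

/-- Probability of the event `S` under the pmf `μ`. -/
noncomputable def pmfProb {α : Type*} [Fintype α] (μ : α → ℝ) (S : α → Prop) : ℝ :=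
  ∑ a, if S a then μ a else 0

/-- Expectation of `f` under the pmf `μ`. -/
noncomputable def pmfExp {α : Type*} [Fintype α] (μ : α → ℝ) (f : α → ℝ) : ℝ :=
  ∑ a, μ a * f a

/-- `μ` is a pairwise-independent ensemble of `M` codewords with marginal `Q`:
each codeword has law `Q` and each pair of distinct codewords has law `Q × Q`. -/
def PairwiseIndepEnsemble {𝒳 : Type*} [Fintype 𝒳] {M : ℕ}
    (μ : (Fin M → 𝒳) → ℝ) (Q : 𝒳 → ℝ) : Prop :=
  IsPMF μ ∧ IsPMF Q ∧
  (∀ (m : Fin M) (x : 𝒳), pmfProb μ (fun c => c m = x) = Q x) ∧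
  (∀ (m k : Fin M), m ≠ k → ∀ (x x' : 𝒳),
    pmfProb μ (fun c => c m = x ∧ c k = x') = Q x * Q x')

-- AUX
lemma rpow_add_le_add_rpow_real {a b p : ℝ} (ha : 0 ≤ a) (hb : 0 ≤ b)
    (hp : 0 ≤ p) (hp1 : p ≤ 1) : (a + b) ^ p ≤ a ^ p + b ^ p := by
  have h := NNReal.rpow_add_le_add_rpow a.toNNReal b.toNNReal hp hp1
  have h2 := NNReal.coe_le_coe.mpr h
  rw [NNReal.coe_add, NNReal.coe_rpow, NNReal.coe_rpow, NNReal.coe_rpow, NNReal.coe_add,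
    Real.coe_toNNReal _ ha, Real.coe_toNNReal _ hb] at h2
  exact h2

lemma sum_rpow_le_rpow_sum' {ι : Type*} (s : Finset ι) (f : ι → ℝ) (hf : ∀ i ∈ s, 0 ≤ f i)
    {p : ℝ} (hp : 0 < p) (hp1 : p ≤ 1) :
    (∑ i ∈ s, f i) ^ p ≤ ∑ i ∈ s, f i ^ p := by
  induction s using Finset.cons_induction with
  | empty => simp [Real.zero_rpow hp.ne']
  | cons a s ha ih =>
    rw [Finset.sum_cons, Finset.sum_cons]
    have h1 : 0 ≤ f a := hf a (Finset.mem_cons_self a s)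
    have h2 : 0 ≤ ∑ i ∈ s, f i := Finset.sum_nonneg fun i hi => hf i (Finset.mem_cons_of_mem hi)
    calc (f a + ∑ i ∈ s, f i) ^ p ≤ f a ^ p + (∑ i ∈ s, f i) ^ p :=
          rpow_add_le_add_rpow_real h1 h2 hp.le hp1
      _ ≤ f a ^ p + ∑ i ∈ s, f i ^ p := by
          gcongr
          exact ih fun i hi => hf i (Finset.mem_cons_of_mem hi)

lemma exists_le_of_pmfExp_le {α : Type*} [Fintype α] {μ : α → ℝ} (hμ : IsPMF μ)
    {f : α → ℝ} {t : ℝ} (h : pmfExp μ f ≤ t) : ∃ a, f a ≤ t := by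
  by_contra hc
  push_neg at hc
  have h1 : ∃ a, 0 < μ a := by
    by_contra h0; push_neg at h0
    have : ∑ a : α, μ a = 0 := Finset.sum_eq_zero fun a _ => le_antisymm (h0 a) (hμ.1 a)
    rw [hμ.2] at this; norm_num at this
  obtain ⟨a₀, ha₀⟩ := h1
  have hlt : ∑ a : α, μ a * t < ∑ a : α, μ a * f a := by
    apply Finset.sum_lt_sum
    · intro i _; exact mul_le_mul_of_nonneg_left (hc i).le (hμ.1 i)
    · exact ⟨a₀, Finset.mem_univ _, by nlinarith [hc a₀]⟩
  rw [← Finset.sum_mul, hμ.2, one_mul] at hlt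
  unfold pmfExp at h
  linarith

lemma Pem_nonneg {𝒳 𝒴 : Type*} [Fintype 𝒴] {M : ℕ}
    {W : 𝒳 → 𝒴 → ℝ} (hW : ∀ x y, 0 ≤ W x y) (c : Fin M → 𝒳) (m : Fin M) :
    0 ≤ Pem W c m :=
  Finset.sum_nonneg fun y _ => mul_nonneg (hW _ _) (by positivity)

lemma Bhat_nonneg {𝒳 𝒴 : Type*} [Fintype 𝒴] (W : 𝒳 → 𝒴 → ℝ) (x x' : 𝒳) :
    0 ≤ Bhat W x x' :=
  Finset.sum_nonneg fun y _ => Real.sqrt_nonneg _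

lemma Bhat_self {𝒳 𝒴 : Type*} [Fintype 𝒴] {W : 𝒳 → 𝒴 → ℝ} (hW : IsChannel W) (x : 𝒳) :
    Bhat W x x = 1 := by
  unfold Bhat
  have : ∀ y, Real.sqrt (W x y * W x y) = W x y := fun y => Real.sqrt_mul_self (hW.1 x y)
  rw [Finset.sum_congr rfl fun y _ => this y]
  exact hW.2 x

lemma Pem_le_sum_Bhat {𝒳 𝒴 : Type*} [Fintype 𝒴] {M : ℕ}
    {W : 𝒳 → 𝒴 → ℝ} (hW : ∀ x y, 0 ≤ W x y) (c : Fin M → 𝒳) (m : Fin M) :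
    Pem W c m ≤ ∑ k ∈ Finset.univ.erase m, Bhat W (c m) (c k) := by
  unfold Pem Bhat
  rw [Finset.sum_comm]
  apply Finset.sum_le_sum
  intro y _
  by_cases h : ∃ k, k ≠ m ∧ W (c m) y ≤ W (c k) y
  · obtain ⟨k, hk, hle⟩ := h
    rw [if_pos ⟨k, hk, hle⟩, mul_one]
    calc W (c m) y = Real.sqrt (W (c m) y * W (c m) y) := (Real.sqrt_mul_self (hW _ _)).symm
      _ ≤ Real.sqrt (W (c m) y * W (c k) y) :=
          Real.sqrt_le_sqrt (mul_le_mul_of_nonneg_left hle (hW _ _))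
      _ ≤ ∑ j ∈ Finset.univ.erase m, Real.sqrt (W (c m) y * W (c j) y) :=
          Finset.single_le_sum (f := fun j => Real.sqrt (W (c m) y * W (c j) y))
            (fun j _ => Real.sqrt_nonneg _)
            (Finset.mem_erase.mpr ⟨hk, Finset.mem_univ _⟩)
  · rw [if_neg h, mul_zero]
    exact Finset.sum_nonneg fun j _ => Real.sqrt_nonneg _

lemma pmfExp_pair {𝒳 : Type*} [Fintype 𝒳] {M : ℕ} {μ : (Fin M → 𝒳) → ℝ} {Q : 𝒳 → ℝ}
    (hμ : PairwiseIndepEnsemble μ Q) {m k : Fin M} (hmk : m ≠ k) (g : 𝒳 → 𝒳 → ℝ) :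
    pmfExp μ (fun c => g (c m) (c k)) = ∑ x, ∑ x', Q x * Q x' * g x x' := by
  unfold pmfExp
  have key : ∀ c : Fin M → 𝒳, μ c * g (c m) (c k)
      = ∑ x, ∑ x', (if c m = x ∧ c k = x' then μ c else 0) * g x x' := by
    intro c
    simp [ite_and, ite_mul, Finset.sum_ite_eq]
  rw [Finset.sum_congr rfl fun c _ => key c, Finset.sum_comm]
  refine Finset.sum_congr rfl fun x _ => ?_
  rw [Finset.sum_comm]
  refine Finset.sum_congr rfl fun x' _ => ?_
  have : ∑ c : Fin M → 𝒳, (if c m = x ∧ c k = x' then μ c else 0) * g x x'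
      = (∑ c : Fin M → 𝒳, if c m = x ∧ c k = x' then μ c else 0) * g x x' :=
    (Finset.sum_mul _ _ _).symm
  rw [this]
  have h2 : (∑ c : Fin M → 𝒳, if c m = x ∧ c k = x' then μ c else 0) = Q x * Q x' := by
    have h3 := hμ.2.2.2 m k hmk x x'
    unfold pmfProb at h3
    rw [← h3]
    exact Finset.sum_congr rfl fun c _ => by congr
  rw [h2]

/-- refined expurgation with vanishing expurgated fraction,
existence form: with `M' ≥ M(1+ε)` codewords and `γ = (1+ε)/ε`, there exists a
code in which at least `M` codewords satisfy the expurgated bound. -/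
theorem refined_expurgation_exists
    {𝒳 𝒴 : Type*} [Fintype 𝒳] [Fintype 𝒴] [Nonempty 𝒳] [Nonempty 𝒴]
    (n : ℕ) (hn : 1 ≤ n)
    (W : (Fin n → 𝒳) → (Fin n → 𝒴) → ℝ) (hW : IsChannel W)
    (Q : (Fin n → 𝒳) → ℝ) (ε : ℝ) (hε : 0 < ε) (M : ℕ) (hM : 1 ≤ M)
    (M' : ℕ) (hM'ge : (M : ℝ) * (1 + ε) ≤ (M' : ℝ)) (hM' : 2 ≤ M')
    (μ : (Fin M' → (Fin n → 𝒳)) → ℝ) (hμ : PairwiseIndepEnsemble μ Q)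
    (ρ : ℝ) (hρ : 1 ≤ ρ) (γ : ℝ) (hγ : γ = (1 + ε) / ε) :
    ∃ c : Fin M' → (Fin n → 𝒳),
      M ≤ (Finset.univ.filter (fun m : Fin M' =>
        Pem W c m ≤
          γ ^ ρ *
            (((M' : ℝ) - 1) * ∑ x, ∑ x', Q x * Q x' * Bhat W x x' ^ (1/ρ)) ^ ρ)).card := by
  obtain ⟨hμpmf, hQpmf, hmarg, hpair⟩ := hμ
  have hρ0 : (0:ℝ) < ρ := lt_of_lt_of_le one_pos hρ
  have hq0 : (0:ℝ) < 1/ρ := by positivity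
  have hq1 : 1/ρ ≤ 1 := by rw [div_le_one hρ0]; exact hρ
  have h1ε : (0:ℝ) < 1 + ε := by linarith
  have hγpos : 0 < γ := by rw [hγ]; positivity
  have hM'R : (2:ℝ) ≤ (M' : ℝ) := by exact_mod_cast hM'
  set B0 : ℝ := ∑ x, ∑ x', Q x * Q x' * Bhat W x x' ^ (1/ρ) with hB0
  have hBnn : ∀ x x', 0 ≤ Q x * Q x' * Bhat W x x' ^ (1/ρ) := fun x x' =>
    mul_nonneg (mul_nonneg (hQpmf.1 x) (hQpmf.1 x')) (Real.rpow_nonneg (Bhat_nonneg W _ _) _)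
  have hB0pos : 0 < B0 := by
    obtain ⟨x₀, hx₀⟩ : ∃ x, 0 < Q x := by
      by_contra h0; push_neg at h0
      have hz : ∑ x, Q x = 0 := Finset.sum_eq_zero fun x _ => le_antisymm (h0 x) (hQpmf.1 x)
      rw [hQpmf.2] at hz; norm_num at hz
    have hterm : 0 < Q x₀ * Q x₀ * Bhat W x₀ x₀ ^ (1/ρ) := by
      rw [Bhat_self hW x₀, Real.one_rpow]; nlinarith
    have h1 : Q x₀ * Q x₀ * Bhat W x₀ x₀ ^ (1/ρ) ≤ ∑ x', Q x₀ * Q x' * Bhat W x₀ x' ^ (1/ρ) :=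
      Finset.single_le_sum (f := fun x' => Q x₀ * Q x' * Bhat W x₀ x' ^ (1/ρ))
        (fun x' _ => hBnn _ _) (Finset.mem_univ x₀)
    have h2 : (∑ x', Q x₀ * Q x' * Bhat W x₀ x' ^ (1/ρ)) ≤ B0 :=
      Finset.single_le_sum (f := fun x => ∑ x', Q x * Q x' * Bhat W x x' ^ (1/ρ))
        (fun x _ => Finset.sum_nonneg fun x' _ => hBnn _ _) (Finset.mem_univ x₀)
    linarith
  have hApos : 0 < ((M':ℝ) - 1) * B0 := by nlinarith
  set K : ℝ := γ ^ ρ * (((M' : ℝ) - 1) * B0) ^ ρ with hK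
  set T : ℝ := γ * (((M':ℝ) - 1) * B0) with hT
  have hTpos : 0 < T := by rw [hT]; positivity
  have hKT : K = T ^ ρ := by
    rw [hK, hT, Real.mul_rpow hγpos.le hApos.le]
  -- expectation bound for each message
  have hEm : ∀ m : Fin M', pmfExp μ (fun c => Pem W c m ^ (1/ρ)) ≤ ((M':ℝ) - 1) * B0 := by
    intro m
    have step : ∀ c : Fin M' → (Fin n → 𝒳), Pem W c m ^ (1/ρ)
        ≤ ∑ k ∈ Finset.univ.erase m, Bhat W (c m) (c k) ^ (1/ρ) := by
      intro c
      calc Pem W c m ^ (1/ρ)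
          ≤ (∑ k ∈ Finset.univ.erase m, Bhat W (c m) (c k)) ^ (1/ρ) :=
            Real.rpow_le_rpow (Pem_nonneg hW.1 c m) (Pem_le_sum_Bhat hW.1 c m) hq0.le
        _ ≤ ∑ k ∈ Finset.univ.erase m, Bhat W (c m) (c k) ^ (1/ρ) :=
            sum_rpow_le_rpow_sum' _ _ (fun k _ => Bhat_nonneg W _ _) hq0 hq1
    have mono : pmfExp μ (fun c => Pem W c m ^ (1/ρ)) ≤
        pmfExp μ (fun c => ∑ k ∈ Finset.univ.erase m, Bhat W (c m) (c k) ^ (1/ρ)) :=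
      Finset.sum_le_sum fun c _ => mul_le_mul_of_nonneg_left (step c) (hμpmf.1 c)
    have hswap : pmfExp μ (fun c => ∑ k ∈ Finset.univ.erase m, Bhat W (c m) (c k) ^ (1/ρ))
        = ∑ k ∈ Finset.univ.erase m, pmfExp μ (fun c => Bhat W (c m) (c k) ^ (1/ρ)) := by
      unfold pmfExp
      simp_rw [Finset.mul_sum]
      rw [Finset.sum_comm]
    have heach : ∀ k ∈ Finset.univ.erase m,
        pmfExp μ (fun c => Bhat W (c m) (c k) ^ (1/ρ)) = B0 := by
      intro k hk
      have hmk : m ≠ k := (Ne.symm (Finset.mem_erase.mp hk).1)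
      exact pmfExp_pair ⟨hμpmf, hQpmf, hmarg, hpair⟩ hmk (fun x x' => Bhat W x x' ^ (1/ρ))
    have hcarde : ((Finset.univ.erase m).card : ℝ) = (M':ℝ) - 1 := by
      rw [Finset.card_erase_of_mem (Finset.mem_univ m), Finset.card_univ, Fintype.card_fin]
      have : 1 ≤ M' := le_trans one_le_two hM'
      push_cast [this]
      ring
    calc pmfExp μ (fun c => Pem W c m ^ (1/ρ))
        ≤ ∑ k ∈ Finset.univ.erase m, pmfExp μ (fun c => Bhat W (c m) (c k) ^ (1/ρ)) := by
          rw [← hswap]; exact mono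
      _ = ∑ k ∈ Finset.univ.erase m, B0 := Finset.sum_congr rfl heach
      _ = ((M':ℝ) - 1) * B0 := by
          rw [Finset.sum_const, nsmul_eq_mul, hcarde]
  -- bad-count bound per code
  have hbad : ∀ c : Fin M' → (Fin n → 𝒳),
      (((Finset.univ.filter (fun m : Fin M' => ¬ (Pem W c m ≤ K))).card : ℝ))
        ≤ (∑ m : Fin M', Pem W c m ^ (1/ρ)) / T := by
    intro c
    rw [le_div_iff₀ hTpos]
    have hTle : ∀ m ∈ Finset.univ.filter (fun m : Fin M' => ¬ (Pem W c m ≤ K)),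
        T ≤ Pem W c m ^ (1/ρ) := by
      intro m hm
      have h1 : K < Pem W c m := lt_of_not_ge (Finset.mem_filter.mp hm).2
      have h2 : K ^ (1/ρ) ≤ Pem W c m ^ (1/ρ) :=
        Real.rpow_le_rpow (by rw [hKT]; positivity) h1.le hq0.le
      have h3 : K ^ (1/ρ) = T := by
        rw [hKT, ← Real.rpow_mul hTpos.le, mul_one_div, div_self hρ0.ne', Real.rpow_one]
      linarith
    calc (((Finset.univ.filter (fun m : Fin M' => ¬ (Pem W c m ≤ K))).card : ℝ)) * T
        = ∑ _m ∈ Finset.univ.filter (fun m : Fin M' => ¬ (Pem W c m ≤ K)), T := by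
          rw [Finset.sum_const, nsmul_eq_mul]
      _ ≤ ∑ m ∈ Finset.univ.filter (fun m : Fin M' => ¬ (Pem W c m ≤ K)), Pem W c m ^ (1/ρ) :=
          Finset.sum_le_sum hTle
      _ ≤ ∑ m : Fin M', Pem W c m ^ (1/ρ) :=
          Finset.sum_le_sum_of_subset_of_nonneg (Finset.filter_subset _ _)
            (fun m _ _ => Real.rpow_nonneg (Pem_nonneg hW.1 c m) _)
  -- expectation of bad count
  have hEbad : pmfExp μ
      (fun c => (((Finset.univ.filter (fun m : Fin M' => ¬ (Pem W c m ≤ K))).card : ℝ)))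
      ≤ (M' : ℝ) / γ := by
    have h1 : pmfExp μ
        (fun c => (((Finset.univ.filter (fun m : Fin M' => ¬ (Pem W c m ≤ K))).card : ℝ)))
        ≤ pmfExp μ (fun c => (∑ m : Fin M', Pem W c m ^ (1/ρ)) / T) :=
      Finset.sum_le_sum fun c _ => mul_le_mul_of_nonneg_left (hbad c) (hμpmf.1 c)
    have h2 : pmfExp μ (fun c => (∑ m : Fin M', Pem W c m ^ (1/ρ)) / T)
        = (∑ m : Fin M', pmfExp μ (fun c => Pem W c m ^ (1/ρ))) / T := by
      unfold pmfExp
      simp_rw [← mul_div_assoc]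
      rw [← Finset.sum_div]
      congr 1
      simp_rw [Finset.mul_sum]
      rw [Finset.sum_comm]
    have h3 : (∑ m : Fin M', pmfExp μ (fun c => Pem W c m ^ (1/ρ)))
        ≤ (M':ℝ) * (((M':ℝ) - 1) * B0) := by
      calc (∑ m : Fin M', pmfExp μ (fun c => Pem W c m ^ (1/ρ)))
          ≤ ∑ _m : Fin M', ((M':ℝ) - 1) * B0 := Finset.sum_le_sum fun m _ => hEm m
        _ = (M':ℝ) * (((M':ℝ) - 1) * B0) := by
            rw [Finset.sum_const, nsmul_eq_mul, Finset.card_univ, Fintype.card_fin]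
    have h4 : (M':ℝ) * (((M':ℝ) - 1) * B0) / T = (M':ℝ) / γ := by
      rw [hT]
      have hne : (M':ℝ) - 1 ≠ 0 := by linarith
      field_simp
    have h6 : (∑ m : Fin M', pmfExp μ (fun c => Pem W c m ^ (1/ρ))) / T
        ≤ (M':ℝ) * (((M':ℝ) - 1) * B0) / T := by gcongr
    rw [h2] at h1
    linarith
  obtain ⟨c, hc⟩ := exists_le_of_pmfExp_le hμpmf hEbad
  refine ⟨c, ?_⟩
  have hsplit := Finset.card_filter_add_card_filter_not
    (s := (Finset.univ : Finset (Fin M'))) (p := fun m : Fin M' => Pem W c m ≤ K)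
  rw [Finset.card_univ, Fintype.card_fin] at hsplit
  have hcardR : ((Finset.univ.filter (fun m : Fin M' => Pem W c m ≤ K)).card : ℝ)
      + ((Finset.univ.filter (fun m : Fin M' => ¬ (Pem W c m ≤ K))).card : ℝ) = (M' : ℝ) := by
    exact_mod_cast hsplit
  have hγdiv : (M':ℝ) / γ = (M':ℝ) * ε / (1 + ε) := by
    rw [hγ, div_div_eq_mul_div]
  have hfinal : (M : ℝ) ≤ ((Finset.univ.filter (fun m : Fin M' => Pem W c m ≤ K)).card : ℝ) := by
    rw [hγdiv] at hc
    have hM1 : (M:ℝ) ≤ (M':ℝ) / (1 + ε) := (le_div_iff₀ h1ε).mpr hM'ge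
    have h2 : (M':ℝ) * ε / (1 + ε) = (M':ℝ) - (M':ℝ) / (1 + ε) := by
      field_simp
      ring
    linarith
  exact_mod_cast hfinal
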